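/- arXiv:1706.03705 — 3 statements merged into one kernel-verified Lean document; each statement's English description precedes it below -/
import Mathlib

section
/- Homogeneous separation: let Q be a nonempty convex set and K a closed convex cone with nonempty interior in a finite-dimensional inner product space. Then Q intersects the interior of K if and only if there is no nonzero v ∈ K* with ⟨v,x⟩ ≤ 0 for all x ∈ Q. Moreover, for any such v, the set Q ∩ K is contained in the face v⊥ ∩ K. -/
open scoped RealInnerProductSpace Pointwise

theorem homogeneous_separation {E : Type*} [NormedAddCommGroup E] [InnerProductSpace ℝ E]
    [FiniteDimensional ℝ E] (Q K : Set E) (hQne : Q.Nonempty) (hQconv : Convex ℝ Q)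
    (hc : IsClosed K) (hconv : Convex ℝ K)
    (hcone : ∀ x ∈ K, ∀ t : ℝ, 0 ≤ t → t • x ∈ K) (hint : (interior K).Nonempty) :
    ((Q ∩ interior K).Nonempty ↔
      ¬ ∃ v : E, v ≠ 0 ∧ (∀ x ∈ K, 0 ≤ ⟪x, v⟫) ∧ (∀ x ∈ Q, ⟪v, x⟫ ≤ 0)) ∧
    (∀ v : E, v ≠ 0 → (∀ x ∈ K, 0 ≤ ⟪x, v⟫) → (∀ x ∈ Q, ⟪v, x⟫ ≤ 0) →
      Q ∩ K ⊆ {x : E | ⟪v, x⟫ = 0} ∩ K) := by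
  -- interior K is invariant under positive scaling
  have hsmul_int : ∀ t : ℝ, 0 < t → ∀ x ∈ interior K, t • x ∈ interior K := by
    intro t ht x hx
    have h1 : t • x ∈ (t • interior K : Set E) := Set.smul_mem_smul_set hx
    rw [← interior_smul₀ ht.ne' K] at h1
    exact interior_mono (fun y hy => by
      obtain ⟨z, hz, rfl⟩ := hy
      exact hcone z hz t ht.le) h1
  have part2 : ∀ v : E, v ≠ 0 → (∀ x ∈ K, 0 ≤ ⟪x, v⟫) → (∀ x ∈ Q, ⟪v, x⟫ ≤ 0) →
      Q ∩ K ⊆ {x : E | ⟪v, x⟫ = 0} ∩ K := by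
    intro v _ hKv hQv x ⟨hxQ, hxK⟩
    refine ⟨le_antisymm (hQv x hxQ) ?_, hxK⟩
    have := hKv x hxK
    rwa [real_inner_comm] at this
  constructor
  · constructor
    · -- forward: interior point rules out separating v
      rintro ⟨x, hxQ, hxint⟩ ⟨v, hv, hKv, hQv⟩
      have hxK : x ∈ K := interior_subset hxint
      have hzero : ⟪v, x⟫ = 0 := (part2 v hv hKv hQv ⟨hxQ, hxK⟩).1
      -- x - δ • v ∈ K for small δ
      obtain ⟨ε, hε, hball⟩ := Metric.isOpen_iff.1 isOpen_interior x hxint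
      have hvnorm : 0 < ‖v‖ := norm_pos_iff.2 hv
      set δ : ℝ := ε / (2 * ‖v‖) with hδdef
      have hδ : 0 < δ := div_pos hε (by positivity)
      have hmem : x - δ • v ∈ K := by
        apply interior_subset
        apply hball
        rw [Metric.mem_ball, dist_eq_norm]
        have : x - δ • v - x = -(δ • v) := by module
        rw [this, norm_neg, norm_smul, Real.norm_eq_abs, abs_of_pos hδ]
        rw [hδdef]
        rw [div_mul_eq_mul_div, mul_comm]
        rw [div_lt_iff₀ (by positivity)]
        nlinarith [hvnorm]
      have h0 := hKv _ hmem
      rw [inner_sub_left, real_inner_smul_left] at h0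
      have hxv : ⟪x, v⟫ = 0 := by rwa [real_inner_comm]
      rw [hxv] at h0
      have : δ * ⟪v, v⟫ ≤ 0 := by linarith
      have hvv : 0 < ⟪v, v⟫ := by
        rw [real_inner_self_eq_norm_mul_norm]; exact mul_pos hvnorm hvnorm
      nlinarith
    · -- backward: no separating v implies Q meets interior K
      intro hno
      by_contra hempty
      apply hno
      rw [Set.not_nonempty_iff_eq_empty] at hempty
      have hdisj : Disjoint (interior K) Q := by
        rw [Set.disjoint_iff_inter_eq_empty, Set.inter_comm]
        exact hempty
      obtain ⟨f, u, hfK, hfQ⟩ :=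
        geometric_hahn_banach_open hconv.interior isOpen_interior hQconv hdisj
      obtain ⟨x₀, hx₀⟩ := hint
      -- show -u ≤ f ≥ 0 facts. First, f x < u on interior K with cone structure ⇒
      -- f ≤ 0 on interior K is impossible... we use g := -f.
      -- Step 1: for x ∈ interior K, f x ≤ 0.
      have hf_nonpos : ∀ x ∈ interior K, f x ≤ 0 := by
        intro x hx
        by_contra hpos
        push_neg at hpos
        -- scale up: t • x ∈ interior K, f (t • x) = t * f x < u for all t > 0
        have ht : ∀ t : ℝ, 0 < t → t * f x < u := by
          intro t ht
          have := hfK _ (hsmul_int t ht x hx)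
          rwa [map_smul, smul_eq_mul] at this
        have := ht ((|u| + 1) / f x) (div_pos (by positivity) hpos)
        rw [div_mul_cancel₀ _ hpos.ne'] at this
        have := abs_nonneg u
        have := le_abs_self u
        linarith
      have hu_nonneg : 0 ≤ u := by
        by_contra hu
        push_neg at hu
        have hfx0 : f x₀ < 0 := lt_of_lt_of_le (hfK x₀ hx₀) hu.le
        have ht : ∀ t : ℝ, 0 < t → t * f x₀ < u := by
          intro t ht
          have := hfK _ (hsmul_int t ht x₀ hx₀)
          rwa [map_smul, smul_eq_mul] at this
        have h1 := ht (u / f x₀) (div_pos_of_neg_of_neg hu hfx0)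
        rw [div_mul_cancel₀ _ hfx0.ne] at h1
        exact lt_irrefl _ h1
      -- Now define v via Riesz on -f
      set g : E →L[ℝ] ℝ := -f with hg
      have hgK : ∀ x ∈ K, 0 ≤ g x := by
        intro x hx
        -- x ∈ K; approximate by interior points on segment to x₀
        have hseg : ∀ t : ℝ, t ∈ Set.Ioc (0:ℝ) 1 → g (x + t • (x₀ - x)) ≥ 0 := by
          intro t ht
          have hmem := hconv.add_smul_sub_mem_interior hx hx₀ ht
          have := hf_nonpos _ hmem
          simp only [hg, ContinuousLinearMap.neg_apply]
          linarith
        -- limit as t → 0⁺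
        have hcont : Filter.Tendsto (fun t : ℝ => g (x + t • (x₀ - x)))
            (nhdsWithin 0 (Set.Ioi 0)) (nhds (g x)) := by
          have : Filter.Tendsto (fun t : ℝ => g (x + t • (x₀ - x))) (nhds 0)
              (nhds (g (x + (0:ℝ) • (x₀ - x)))) := by
            apply (g.continuous.comp ?_).tendsto
            exact continuous_const.add (continuous_id.smul continuous_const)
          simpa using this.mono_left nhdsWithin_le_nhds
        refine ge_of_tendsto hcont ?_
        filter_upwards [Ioo_mem_nhdsGT_of_mem (Set.left_mem_Ico.2 one_pos)] with t ht
        exact hseg t ⟨ht.1, ht.2.le⟩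
      have hgQ : ∀ x ∈ Q, g x ≤ -u := by
        intro x hx
        have := hfQ x hx
        simp only [hg, ContinuousLinearMap.neg_apply]
        linarith
      set v : E := (InnerProductSpace.toDual ℝ E).symm g with hv
      have hvapp : ∀ x : E, ⟪v, x⟫ = g x := fun x =>
        InnerProductSpace.toDual_symm_apply
      refine ⟨v, ?_, ?_, ?_⟩
      · intro h0
        obtain ⟨q, hq⟩ := hQne
        have h1 : g q ≤ -u := hgQ q hq
        have h2 : ⟪v, q⟫ = g q := hvapp q
        have h4 : ⟪v, x₀⟫ = g x₀ := hvapp x₀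
        rw [h0, inner_zero_left] at h2 h4
        have h3 : f x₀ < u := hfK x₀ hx₀
        have h5 : g x₀ = -f x₀ := rfl
        have h6 : g q = -f q := rfl
        linarith
      · intro x hx
        rw [real_inner_comm, hvapp]
        exact hgK x hx
      · intro x hx
        rw [hvapp]
        have := hgQ x hx
        linarith [hu_nonneg]
  · exact part2
end

section
/- Theorem of the alternative for the primal: let K be a closed convex cone with nonempty interior, A : E → F linear, b ∈ range(A). Exactly one of the following holds: (1) there exists x in the interior of K with Ax = b; (2) there exists y with A*y ∈ K*, A*y ≠ 0, and ⟨b,y⟩ ≤ 0. -/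
open scoped RealInnerProductSpace Pointwise

theorem primal_theorem_of_alternative {E F : Type*}
    [NormedAddCommGroup E] [InnerProductSpace ℝ E]
    [NormedAddCommGroup F] [InnerProductSpace ℝ F]
    [FiniteDimensional ℝ E] [FiniteDimensional ℝ F]
    (A : E →ₗ[ℝ] F) (K : Set E) (hc : IsClosed K) (hconv : Convex ℝ K)
    (hcone : ∀ x ∈ K, ∀ t : ℝ, 0 ≤ t → t • x ∈ K) (hint : (interior K).Nonempty)
    (b : F) (hb : b ∈ LinearMap.range A) :
    Xor' (∃ x ∈ interior K, A x = b)
      (∃ y : F, (∀ x ∈ K, 0 ≤ ⟪x, LinearMap.adjoint A y⟫) ∧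
        LinearMap.adjoint A y ≠ 0 ∧ ⟪b, y⟫ ≤ 0) := by
  -- First: the two alternatives cannot both hold.
  have hnotboth : (∃ x ∈ interior K, A x = b) →
      ¬ (∃ y : F, (∀ x ∈ K, 0 ≤ ⟪x, LinearMap.adjoint A y⟫) ∧
        LinearMap.adjoint A y ≠ 0 ∧ ⟪b, y⟫ ≤ 0) := by
    rintro ⟨x, hx, hAx⟩ ⟨y, hy1, hy2, hy3⟩
    set v := LinearMap.adjoint A y with hv
    have hvnorm : 0 < ‖v‖ := norm_pos_iff.2 hy2
    obtain ⟨ε, hε, hball⟩ := Metric.mem_nhds_iff.1 (mem_interior_iff_mem_nhds.1 hx)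
    set δ : ℝ := ε / (2 * ‖v‖) with hδ
    have hδpos : 0 < δ := by positivity
    have hmem : x - δ • v ∈ K := by
      apply hball
      simp only [Metric.mem_ball, dist_eq_norm]
      have h1 : x - δ • v - x = -(δ • v) := by abel
      rw [h1, norm_neg, norm_smul, Real.norm_of_nonneg hδpos.le, hδ]
      rw [div_mul_eq_mul_div, mul_comm (2 : ℝ) ‖v‖, ← div_div, mul_div_assoc,
        div_self hvnorm.ne']
      linarith
    have h0 := hy1 _ hmem
    rw [inner_sub_left, real_inner_smul_left] at h0
    have hxv : ⟪x, v⟫ = ⟪b, y⟫ := by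
      rw [hv, LinearMap.adjoint_inner_right, hAx]
    have hvv : (0:ℝ) < ⟪v, v⟫ := by
      rw [real_inner_self_eq_norm_mul_norm]; positivity
    nlinarith
  -- positive scaling preserves the interior of K
  have hKint : ∀ t : ℝ, 0 < t → ∀ z ∈ interior K, t • z ∈ interior K := by
    intro t ht z hz
    have hK : t • K = K := by
      apply Set.Subset.antisymm
      · rintro _ ⟨x, hxK, rfl⟩; exact hcone x hxK t ht.le
      · intro x hxK
        exact ⟨t⁻¹ • x, hcone x hxK _ (inv_nonneg.2 ht.le),
          by show t • (t⁻¹ • x) = x; rw [smul_smul, mul_inv_cancel₀ ht.ne', one_smul]⟩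
    have h2 := interior_smul₀ ht.ne' K
    rw [hK] at h2
    rw [h2]
    exact Set.smul_mem_smul_set hz
  rcases Classical.em (∃ x ∈ interior K, A x = b) with h1 | h1
  · exact Or.inl ⟨h1, hnotboth h1⟩
  · refine Or.inr ⟨?_, h1⟩
    obtain ⟨xb, hxb⟩ := hb
    obtain ⟨e, he⟩ := hint
    -- separate interior K from the affine set {x | A x = b}
    have hconvt : Convex ℝ {x : E | A x = b} := by
      intro p hp q hq a a' ha ha' haa
      simp only [Set.mem_setOf_eq, map_add, map_smul] at *
      rw [hp, hq, ← add_smul, haa, one_smul]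
    have hdisj : Disjoint (interior K) {x : E | A x = b} :=
      Set.disjoint_left.2 fun x hx hx2 => h1 ⟨x, hx, hx2⟩
    obtain ⟨f, c, hfs, hft⟩ :=
      geometric_hahn_banach_open (hconv.interior) isOpen_interior hconvt hdisj
    have hxbt : xb ∈ {x : E | A x = b} := hxb
    have hcxb : c ≤ f xb := hft xb hxbt
    have hfe : f e < c := hfs e he
    -- c is nonnegative
    have hc0 : 0 ≤ c := by
      by_contra hcneg
      push_neg at hcneg
      have hfe0 : f e < 0 := hfe.trans hcneg
      have ht : (0 : ℝ) < c / (2 * f e) := div_pos_of_neg_of_neg hcneg (by linarith)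
      have := hfs _ (hKint _ ht e he)
      rw [map_smul, smul_eq_mul] at this
      rw [div_mul_eq_mul_div, mul_comm] at this
      rw [mul_comm 2 (f e), mul_div_mul_left c 2 (by linarith : f e ≠ 0)] at this
      linarith
    -- f is nonpositive on the interior of K
    have hfint : ∀ z ∈ interior K, f z ≤ 0 := by
      intro z hz
      by_contra hfz
      push_neg at hfz
      have ht : (0 : ℝ) < (c + 1) / f z := by positivity
      have h3 := hfs _ (hKint _ ht z hz)
      rw [map_smul, smul_eq_mul, div_mul_cancel₀ _ hfz.ne'] at h3
      linarith
    -- f is nonpositive on K (by a limiting argument)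
    have hfK : ∀ x ∈ K, f x ≤ 0 := by
      intro x hxK
      have hlim : Filter.Tendsto (fun a : ℝ => a * f e + (1 - a) * f x)
          (nhdsWithin 0 (Set.Ioi 0)) (nhds (f x)) := by
        have hcont : Continuous fun a : ℝ => a * f e + (1 - a) * f x := by continuity
        have := hcont.tendsto 0
        simp only [zero_mul, sub_zero, one_mul, zero_add] at this
        exact this.mono_left nhdsWithin_le_nhds
      refine le_of_tendsto hlim ?_
      filter_upwards [Ioo_mem_nhdsGT_of_mem (Set.left_mem_Ico.2 one_pos)] with a ha
      have hmem : a • e + (1 - a) • x ∈ interior K :=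
        hconv.combo_interior_closure_mem_interior he
          (subset_closure hxK) ha.1 (by linarith [ha.2]) (by ring)
      have := hfint _ hmem
      rwa [map_add, map_smul, map_smul, smul_eq_mul, smul_eq_mul] at this
    -- f vanishes on the kernel of A
    have hker : ∀ k, A k = 0 → f k = 0 := by
      intro k hk
      by_contra hfk
      have : ∀ t : ℝ, c ≤ f xb + t * f k := by
        intro t
        have hmem : xb + t • k ∈ {x : E | A x = b} := by
          simp only [Set.mem_setOf_eq, map_add, map_smul, hk, smul_zero, add_zero, hxb]
        have := hft _ hmem
        rwa [map_add, map_smul, smul_eq_mul] at this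
      have h4 := this ((c - 1 - f xb) / f k)
      rw [div_mul_cancel₀ _ hfk] at h4
      linarith
    -- Riesz representation of f
    set u : E := (InnerProductSpace.toDual ℝ E).symm f with hu
    have huv : ∀ x : E, ⟪u, x⟫ = f x := fun x => InnerProductSpace.toDual_symm_apply
    -- u lies in the range of the adjoint
    have hrange : (LinearMap.range (LinearMap.adjoint A))ᗮ = LinearMap.ker A := by
      ext x
      simp only [Submodule.mem_orthogonal, LinearMap.mem_range, LinearMap.mem_ker,
        forall_exists_index]
      constructor
      · intro h
        have := h (LinearMap.adjoint A (A x)) (A x) rfl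
        rw [real_inner_comm, LinearMap.adjoint_inner_right] at this
        exact inner_self_eq_zero.1 this
      · rintro h _ y rfl
        rw [real_inner_comm, LinearMap.adjoint_inner_right, h, inner_zero_left]
    have humem : u ∈ LinearMap.range (LinearMap.adjoint A) := by
      rw [← Submodule.orthogonal_orthogonal (LinearMap.range (LinearMap.adjoint A)), hrange]
      intro k hk
      rw [real_inner_comm, huv k, hker k hk]
    obtain ⟨y, hy⟩ := humem
    refine ⟨-y, ?_, ?_, ?_⟩
    · intro x hxK
      rw [map_neg, hy, inner_neg_right, real_inner_comm, huv x]
      linarith [hfK x hxK]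
    · rw [map_neg, hy, neg_ne_zero]
      intro h0
      have h5 : f e = 0 := by rw [← huv e, h0, inner_zero_left]
      have h6 : f xb = 0 := by rw [← huv xb, h0, inner_zero_left]
      linarith
    · have : ⟪b, -y⟫ = ⟪xb, LinearMap.adjoint A (-y)⟫ := by
        rw [LinearMap.adjoint_inner_right, hxb]
      rw [this, map_neg, hy, inner_neg_right, real_inner_comm, huv xb]
      linarith
end

section
/- If the primal feasible set {x ∈ K : Ax = b} is nonempty and y satisfies A*y ∈ K*, A*y ≠ 0, and ⟨b,y⟩ ≤ 0, then in fact ⟨b,y⟩ = 0, and every primal feasible x lies in the face (A*y)⊥ ∩ K. -/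
open scoped RealInnerProductSpace

theorem auxiliary_certificate_gives_face {E F : Type*}
    [NormedAddCommGroup E] [InnerProductSpace ℝ E]
    [NormedAddCommGroup F] [InnerProductSpace ℝ F]
    [FiniteDimensional ℝ E] [FiniteDimensional ℝ F]
    (A : E →ₗ[ℝ] F) (K : Set E) (hc : IsClosed K) (hconv : Convex ℝ K)
    (hcone : ∀ x ∈ K, ∀ t : ℝ, 0 ≤ t → t • x ∈ K)
    (b : F) (hfeas : ∃ x ∈ K, A x = b) (y : F)
    (hdual : ∀ x ∈ K, 0 ≤ ⟪x, LinearMap.adjoint A y⟫)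
    (hny : LinearMap.adjoint A y ≠ 0) (hby : ⟪b, y⟫ ≤ 0) :
    ⟪b, y⟫ = 0 ∧ ∀ x ∈ K, A x = b → x ∈ {z : E | ⟪LinearMap.adjoint A y, z⟫ = 0} ∩ K := by
  obtain ⟨x0, hx0K, hx0⟩ := hfeas
  have key : ∀ x ∈ K, A x = b → ⟪x, LinearMap.adjoint A y⟫ = ⟪b, y⟫ := by
    intro x hx hAx
    rw [LinearMap.adjoint_inner_right, hAx]
  have h0 : ⟪b, y⟫ = 0 :=
    le_antisymm hby (key x0 hx0K hx0 ▸ hdual x0 hx0K)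
  refine ⟨h0, fun x hx hAx => ⟨?_, hx⟩⟩
  have := key x hx hAx
  rw [h0] at this
  simpa [real_inner_comm] using this
end
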